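/- Let K ⊆ ℂ^d be compact, D ⊆ ℂ an open disc, and f : K → ℂ a continuous function such that for every open disc D' ⊆ ℂ and every injective holomorphic map φ : D' → ℂ^d with φ(D') ⊆ K, the composition f ∘ φ is holomorphic. Then for every (not necessarily injective) holomorphic map φ : D → ℂ^d with φ(D) ⊆ K, the composition f ∘ φ is holomorphic on D. -/

import Mathlib

/-- A function with nonzero strict derivative at a point is injective on some
ball around that point. -/
lemma locInj_aux {g : ℂ → ℂ} {z v : ℂ} (hg : HasStrictDerivAt g v z) (hv : v ≠ 0) :
    ∃ ε > 0, Set.InjOn g (Metric.ball z ε) := by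
  have h := (hg.hasStrictFDerivAt_equiv hv).eventually_left_inverse
  rw [Metric.eventually_nhds_iff_ball] at h
  obtain ⟨ε, hε, hinv⟩ := h
  exact ⟨ε, hε, fun a ha b hb hab => by rw [← hinv a ha, ← hinv b hb, hab]⟩

/-- If a continuous `f : K → ℂ` (on a compact `K ⊆ ℂ^d`) composes
holomorphically with every *injective* holomorphic disc contained in `K`,
then it composes holomorphically with every (not necessarily injective)
holomorphic disc contained in `K`. -/
theorem stmt9 (d : ℕ) (K : Set (Fin d → ℂ)) (hK : IsCompact K)
    (f : (Fin d → ℂ) → ℂ) (hf : ContinuousOn f K)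
    (hinj : ∀ (c : ℂ) (r : ℝ), 0 < r → ∀ φ : ℂ → (Fin d → ℂ),
      DifferentiableOn ℂ φ (Metric.ball c r) →
      Set.InjOn φ (Metric.ball c r) →
      Set.MapsTo φ (Metric.ball c r) K →
      DifferentiableOn ℂ (f ∘ φ) (Metric.ball c r)) :
    ∀ (c : ℂ) (r : ℝ), 0 < r → ∀ φ : ℂ → (Fin d → ℂ),
      DifferentiableOn ℂ φ (Metric.ball c r) →
      Set.MapsTo φ (Metric.ball c r) K →
      DifferentiableOn ℂ (f ∘ φ) (Metric.ball c r) := by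
  intro c r hr φ hφ hmaps
  have hopen : IsOpen (Metric.ball c r) := Metric.isOpen_ball
  have hφa : AnalyticOnNhd ℂ φ (Metric.ball c r) := hφ.analyticOnNhd hopen
  have hda : AnalyticOnNhd ℂ (deriv φ) (Metric.ball c r) := hφa.deriv
  have hcont : ContinuousOn (f ∘ φ) (Metric.ball c r) :=
    hf.comp hφ.continuousOn hmaps
  intro z₀ hz₀
  suffices h : DifferentiableAt ℂ (f ∘ φ) z₀ from h.differentiableWithinAt
  rcases (hda z₀ hz₀).eventually_eq_zero_or_eventually_ne_zero with hzero | hne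
  · -- derivative vanishes near `z₀` : `φ` is locally constant
    rw [Metric.eventually_nhds_iff_ball] at hzero
    obtain ⟨ε, hε, hball⟩ := hzero
    obtain ⟨δ, hδ, hδε, hδsub⟩ :
        ∃ δ > 0, δ ≤ ε ∧ Metric.ball z₀ δ ⊆ Metric.ball c r := by
      refine ⟨min ε (r - dist z₀ c), ?_, min_le_left _ _, ?_⟩
      · exact lt_min hε (by simpa [Metric.mem_ball] using hz₀)
      · intro y hy
        have := Metric.mem_ball.mp hy
        have : dist y z₀ < r - dist z₀ c := lt_of_lt_of_le this (min_le_right _ _)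
        exact Metric.mem_ball.mpr
          (lt_of_le_of_lt (dist_triangle y z₀ c) (by linarith))
    have hconst : ∀ w ∈ Metric.ball z₀ δ, φ w = φ z₀ := by
      intro w hw
      refine (convex_ball z₀ δ).is_const_of_fderivWithin_eq_zero
        (hφ.mono hδsub) (fun x hx => ?_) hw (Metric.mem_ball_self hδ)
      rw [fderivWithin_of_isOpen Metric.isOpen_ball hx, ← toSpanSingleton_deriv,
        hball x (Metric.ball_subset_ball hδε hx)]
      ext y
      simp
    have heq : (f ∘ φ) =ᶠ[nhds z₀] fun _ => f (φ z₀) := by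
      filter_upwards [Metric.ball_mem_nhds z₀ hδ] with w hw
      simp [Function.comp, hconst w hw]
    exact (differentiableAt_const (f (φ z₀))).congr_of_eventuallyEq heq
  · -- derivative nonvanishing on a punctured neighborhood
    have hev : ∀ᶠ z in nhdsWithin z₀ {z₀}ᶜ, DifferentiableAt ℂ (f ∘ φ) z := by
      filter_upwards [hne, nhdsWithin_le_nhds (hopen.mem_nhds hz₀)] with z hz hzb
      -- pick a coordinate with nonzero derivative
      obtain ⟨j, hj⟩ := Function.ne_iff.mp hz
      have hd : HasDerivAt φ (deriv φ z) z :=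
        (hφ.differentiableAt (hopen.mem_nhds hzb)).hasDerivAt
      have hgj : HasDerivAt (fun w => φ w j) (deriv φ z j) z := hasDerivAt_pi.mp hd j
      -- strict derivative of the coordinate function via analyticity
      have hgd : DifferentiableOn ℂ (fun w => φ w j) (Metric.ball c r) :=
        fun x hx => differentiableWithinAt_pi.mp (hφ x hx) j
      have hgan : AnalyticAt ℂ (fun w => φ w j) z := hgd.analyticOnNhd hopen z hzb
      obtain ⟨p, hp⟩ := hgan
      have hst := hp.hasStrictDerivAt
      have hvne : (p 1 fun _ => (1 : ℂ)) ≠ 0 := by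
        have : deriv (fun w => φ w j) z = p 1 fun _ => (1 : ℂ) := hst.hasDerivAt.deriv
        rw [hgj.deriv] at this
        rw [← this]
        simpa using hj
      obtain ⟨ε, hε, hginj⟩ := locInj_aux hst hvne
      -- shrink to stay inside the big ball
      obtain ⟨δ, hδ, hδε, hδsub⟩ :
          ∃ δ > 0, δ ≤ ε ∧ Metric.ball z δ ⊆ Metric.ball c r := by
        refine ⟨min ε (r - dist z c), ?_, min_le_left _ _, ?_⟩
        · exact lt_min hε (by simpa [Metric.mem_ball] using hzb)
        · intro y hy
          have := Metric.mem_ball.mp hy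
          have : dist y z < r - dist z c := lt_of_lt_of_le this (min_le_right _ _)
          exact Metric.mem_ball.mpr
            (lt_of_le_of_lt (dist_triangle y z c) (by linarith))
      have hφinj : Set.InjOn φ (Metric.ball z δ) := by
        intro a ha b hb hab
        exact hginj (Metric.ball_subset_ball hδε ha) (Metric.ball_subset_ball hδε hb)
          (show φ a j = φ b j by rw [hab])
      have := hinj z δ hδ φ (hφ.mono hδsub) hφinj
        (fun x hx => hmaps (hδsub hx))
      exact this.differentiableAt (Metric.isOpen_ball.mem_nhds (Metric.mem_ball_self hδ))
    exact (Complex.analyticAt_of_differentiable_on_punctured_nhds_of_continuousAt hev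
      (hcont.continuousAt (hopen.mem_nhds hz₀))).differentiableAt
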